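/- Tensorization of hypercontractivity: if (X₁,Y₁) and (X₂,Y₂) are independent pairs of finitely valued random variables, each (p,q)-hypercontractive with 1 ≤ q ≤ p, then ((X₁,X₂),(Y₁,Y₂)) is (p,q)-hypercontractive. -/

import Mathlib

open Finset Real

noncomputable def fexp {Ω : Type*} [Fintype Ω] (w : Ω → ℝ) (f : Ω → ℝ) : ℝ :=
  ∑ ω, w ω * f ω

def IsProbWeight {Ω : Type*} [Fintype Ω] (w : Ω → ℝ) : Prop :=
  (∀ ω, 0 ≤ w ω) ∧ ∑ ω, w ω = 1

noncomputable def maxCorr {Ω A B : Type*} [Fintype Ω] (w : Ω → ℝ)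
    (X : Ω → A) (Y : Ω → B) : ℝ :=
  sSup { r : ℝ | ∃ f : A → ℝ, ∃ g : B → ℝ,
    fexp w (fun ω => f (X ω)) = 0 ∧ fexp w (fun ω => g (Y ω)) = 0 ∧
    fexp w (fun ω => (f (X ω))^2) ≤ 1 ∧ fexp w (fun ω => (g (Y ω))^2) ≤ 1 ∧
    r = fexp w (fun ω => f (X ω) * g (Y ω)) }

noncomputable def condExpOn {Ω A : Type*} [Fintype Ω] [DecidableEq A]
    (w : Ω → ℝ) (X : Ω → A) (h : Ω → ℝ) (ω : Ω) : ℝ :=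
  (∑ ωp, if X ωp = X ω then w ωp * h ωp else 0) / (∑ ωp, if X ωp = X ω then w ωp else 0)

def IsHC {Ω A B : Type*} [Fintype Ω] [DecidableEq A]
    (w : Ω → ℝ) (X : Ω → A) (Y : Ω → B) (p q : ℝ) : Prop :=
  ∀ g : B → ℝ,
    (fexp w (fun ω => |condExpOn w X (fun ωp => g (Y ωp)) ω| ^ p)) ^ (1/p)
      ≤ (fexp w (fun ω => |g (Y ω)| ^ q)) ^ (1/q)

/-- Conditional expectation on a product factorizes (exact algebraic identity). -/
lemma condExpOn_prod {Ω₁ Ω₂ A₁ A₂ : Type*} [Fintype Ω₁] [Fintype Ω₂]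
    [DecidableEq A₁] [DecidableEq A₂]
    (w₁ : Ω₁ → ℝ) (w₂ : Ω₂ → ℝ) (X₁ : Ω₁ → A₁) (X₂ : Ω₂ → A₂)
    (h : Ω₁ → Ω₂ → ℝ) (ω : Ω₁ × Ω₂) :
    condExpOn (fun ω : Ω₁ × Ω₂ => w₁ ω.1 * w₂ ω.2) (fun ω => (X₁ ω.1, X₂ ω.2))
      (fun ωp => h ωp.1 ωp.2) ω
    = condExpOn w₁ X₁ (fun a => condExpOn w₂ X₂ (fun b => h a b) ω.2) ω.1 := by
  classical
  obtain ⟨ω₁, ω₂⟩ := ω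
  simp only [condExpOn, Fintype.sum_prod_type, Prod.mk.injEq, ite_and]
  have key1 : ∀ a : Ω₁,
      (∑ b, if X₁ a = X₁ ω₁ then if X₂ b = X₂ ω₂ then w₁ a * w₂ b * h a b else 0 else 0)
      = if X₁ a = X₁ ω₁ then w₁ a * (∑ b, if X₂ b = X₂ ω₂ then w₂ b * h a b else 0) else 0 := by
    intro a
    split
    · rw [Finset.mul_sum]
      exact Finset.sum_congr rfl fun b _ => by split <;> first | ring | simp
    · simp
  have key2 : ∀ a : Ω₁,
      (∑ b, if X₁ a = X₁ ω₁ then if X₂ b = X₂ ω₂ then w₁ a * w₂ b else 0 else 0)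
      = if X₁ a = X₁ ω₁ then w₁ a * (∑ b, if X₂ b = X₂ ω₂ then w₂ b else 0) else 0 := by
    intro a
    split
    · rw [Finset.mul_sum]
      exact Finset.sum_congr rfl fun b _ => by split <;> simp
    · simp
  simp only [key1, key2]
  set d2 := ∑ b, if X₂ b = X₂ ω₂ then w₂ b else 0 with hd2
  have hnum : ∀ a : Ω₁,
      (if X₁ a = X₁ ω₁ then
          w₁ a * ((∑ b, if X₂ b = X₂ ω₂ then w₂ b * h a b else 0) / d2) else 0)
      = (if X₁ a = X₁ ω₁ then
          w₁ a * (∑ b, if X₂ b = X₂ ω₂ then w₂ b * h a b else 0) else 0) / d2 := by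
    intro a
    split
    · rw [mul_div_assoc]
    · rw [zero_div]
  rw [show (∑ a, if X₁ a = X₁ ω₁ then
        w₁ a * ((∑ b, if X₂ b = X₂ ω₂ then w₂ b * h a b else 0) / d2) else 0)
      = (∑ a, if X₁ a = X₁ ω₁ then
        w₁ a * (∑ b, if X₂ b = X₂ ω₂ then w₂ b * h a b else 0) else 0) / d2 from by
    rw [Finset.sum_div]; exact Finset.sum_congr rfl fun a _ => hnum a]
  rw [show (∑ a, if X₁ a = X₁ ω₁ then w₁ a * d2 else 0)
      = (∑ a, if X₁ a = X₁ ω₁ then w₁ a else 0) * d2 from by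
    rw [Finset.sum_mul]; exact Finset.sum_congr rfl fun a _ => by split <;> simp]
  rw [div_div]
  ring_nf

/-- Finite weighted Minkowski / triangle inequality for `L^r` sums. -/
lemma minkowski_fin {ι κ : Type*} [Fintype κ] (r : ℝ) (hr : 1 ≤ r)
    (s : Finset ι) (f : ι → κ → ℝ) (hf : ∀ i k, 0 ≤ f i k) :
    (∑ k, (∑ i ∈ s, f i k) ^ r) ^ (1/r) ≤ ∑ i ∈ s, (∑ k, (f i k) ^ r) ^ (1/r) := by
  classical
  have hr0 : (0:ℝ) < r := lt_of_lt_of_le one_pos hr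
  induction s using Finset.induction_on with
  | empty =>
      have h1 : (∑ k : κ, (∑ i ∈ (∅:Finset ι), f i k) ^ r) = 0 := by
        simp [Real.zero_rpow hr0.ne']
      rw [h1, Finset.sum_empty, Real.zero_rpow (by positivity : (1:ℝ)/r ≠ 0)]
  | insert a s hx ih =>
      rw [Finset.sum_insert hx]
      have key : (∑ k, (f a k + ∑ i ∈ s, f i k) ^ r) ^ (1/r)
          ≤ (∑ k, (f a k) ^ r) ^ (1/r) + (∑ k, (∑ i ∈ s, f i k) ^ r) ^ (1/r) := by
        have := Real.Lp_add_le_of_nonneg (s := (Finset.univ : Finset κ))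
          (f := fun k => f a k) (g := fun k => ∑ i ∈ s, f i k) hr
          (fun k _ => hf a k) (fun k _ => Finset.sum_nonneg fun i _ => hf i k)
        exact this
      calc (∑ k, (∑ i ∈ insert a s, f i k) ^ r) ^ (1/r)
          = (∑ k, (f a k + ∑ i ∈ s, f i k) ^ r) ^ (1/r) := by
            congr 1; exact Finset.sum_congr rfl fun k _ => by rw [Finset.sum_insert hx]
        _ ≤ (∑ k, (f a k) ^ r) ^ (1/r) + (∑ k, (∑ i ∈ s, f i k) ^ r) ^ (1/r) := key
        _ ≤ (∑ k, (f a k) ^ r) ^ (1/r) + ∑ i ∈ s, (∑ k, (f i k) ^ r) ^ (1/r) :=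
            add_le_add_right ih _

lemma weighted_minkowski {ι κ : Type*} [Fintype ι] [Fintype κ]
    (u : ι → ℝ) (v : κ → ℝ) (hu : ∀ i, 0 ≤ u i) (hv : ∀ k, 0 ≤ v k)
    (F : ι → κ → ℝ) (hF : ∀ i k, 0 ≤ F i k) (p q : ℝ) (hq0 : 0 < q) (hqp : q ≤ p) :
    (∑ k, v k * (∑ i, u i * F i k ^ q) ^ (p/q)) ^ (q/p)
      ≤ ∑ i, u i * (∑ k, v k * F i k ^ p) ^ (q/p) := by
  have hp0 : (0:ℝ) < p := lt_of_lt_of_le hq0 hqp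
  have hr : 1 ≤ p / q := (one_le_div hq0).mpr hqp
  have hexp1 : (q/p) * (p/q) = 1 := by field_simp
  have hexp2 : q * (p/q) = p := by field_simp
  have hexp3 : (p/q) * (q/p) = 1 := by field_simp
  set f : ι → κ → ℝ := fun i k => v k ^ (q/p) * (u i * F i k ^ q) with hf
  have hfnn : ∀ i k, 0 ≤ f i k := fun i k =>
    mul_nonneg (Real.rpow_nonneg (hv k) _)
      (mul_nonneg (hu i) (Real.rpow_nonneg (hF i k) _))
  have mink := minkowski_fin (p/q) hr (Finset.univ : Finset ι) f hfnn
  rw [one_div_div] at mink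
  have claim1 : ∀ k, (∑ i, f i k) ^ (p/q) = v k * (∑ i, u i * F i k ^ q) ^ (p/q) := by
    intro k
    rw [hf, ← Finset.mul_sum,
      Real.mul_rpow (Real.rpow_nonneg (hv k) _)
        (Finset.sum_nonneg fun i _ => mul_nonneg (hu i) (Real.rpow_nonneg (hF i k) _)),
      ← Real.rpow_mul (hv k), hexp1, Real.rpow_one]
  have claim2 : ∀ i, (∑ k, (f i k) ^ (p/q)) ^ (q/p)
      = u i * (∑ k, v k * F i k ^ p) ^ (q/p) := by
    intro i
    have hterm : ∀ k, (f i k) ^ (p/q) = u i ^ (p/q) * (v k * F i k ^ p) := by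
      intro k
      rw [hf]
      rw [Real.mul_rpow (Real.rpow_nonneg (hv k) _)
          (mul_nonneg (hu i) (Real.rpow_nonneg (hF i k) _)),
        ← Real.rpow_mul (hv k), hexp1, Real.rpow_one,
        Real.mul_rpow (hu i) (Real.rpow_nonneg (hF i k) _),
        ← Real.rpow_mul (hF i k), hexp2]
      ring
    simp only [hterm]
    rw [← Finset.mul_sum,
      Real.mul_rpow (Real.rpow_nonneg (hu i) _)
        (Finset.sum_nonneg fun k _ => mul_nonneg (hv k) (Real.rpow_nonneg (hF i k) _)),
      ← Real.rpow_mul (hu i), hexp3, Real.rpow_one]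
  calc (∑ k, v k * (∑ i, u i * F i k ^ q) ^ (p/q)) ^ (q/p)
      = (∑ k, (∑ i, f i k) ^ (p/q)) ^ (q/p) := by
        congr 1; exact Finset.sum_congr rfl fun k _ => (claim1 k).symm
    _ ≤ ∑ i, (∑ k, (f i k) ^ (p/q)) ^ (q/p) := mink
    _ = ∑ i, u i * (∑ k, v k * F i k ^ p) ^ (q/p) :=
        Finset.sum_congr rfl fun i _ => claim2 i

theorem hc_tensorize {Ω₁ Ω₂ A₁ B₁ A₂ B₂ : Type*}
    [Fintype Ω₁] [Fintype Ω₂] [DecidableEq A₁] [DecidableEq A₂]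
    (w₁ : Ω₁ → ℝ) (w₂ : Ω₂ → ℝ) (h₁ : IsProbWeight w₁) (h₂ : IsProbWeight w₂)
    (X₁ : Ω₁ → A₁) (Y₁ : Ω₁ → B₁) (X₂ : Ω₂ → A₂) (Y₂ : Ω₂ → B₂)
    (p q : ℝ) (hq : 1 ≤ q) (hqp : q ≤ p)
    (hc₁ : IsHC w₁ X₁ Y₁ p q) (hc₂ : IsHC w₂ X₂ Y₂ p q) :
    IsHC (fun ω : Ω₁ × Ω₂ => w₁ ω.1 * w₂ ω.2)
      (fun ω => (X₁ ω.1, X₂ ω.2)) (fun ω => (Y₁ ω.1, Y₂ ω.2)) p q := by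
  classical
  obtain ⟨hw1, -⟩ := h₁
  obtain ⟨hw2, -⟩ := h₂
  have hq0 : (0:ℝ) < q := lt_of_lt_of_le one_pos hq
  have hp0 : (0:ℝ) < p := lt_of_lt_of_le hq0 hqp
  intro g
  -- the iterated conditional expectation function
  set CE : Ω₁ → Ω₂ → ℝ :=
    fun a b => condExpOn w₂ X₂ (fun b' => g (Y₁ a, Y₂ b')) b with hCE
  set S : ℝ := ∑ b, w₂ b * ∑ a, w₁ a *
      |condExpOn w₁ X₁ (fun a' => CE a' b) a| ^ p with hSdef
  set V : ℝ := ∑ a, w₁ a * ∑ b, w₂ b * |g (Y₁ a, Y₂ b)| ^ q with hVdef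
  have hSnn : 0 ≤ S := Finset.sum_nonneg fun b _ => mul_nonneg (hw2 b) <|
    Finset.sum_nonneg fun a _ => mul_nonneg (hw1 a) (Real.rpow_nonneg (abs_nonneg _) _)
  have hVnn : 0 ≤ V := Finset.sum_nonneg fun a _ => mul_nonneg (hw1 a) <|
    Finset.sum_nonneg fun b _ => mul_nonneg (hw2 b) (Real.rpow_nonneg (abs_nonneg _) _)
  -- rewrite the LHS of the goal
  have hLHS : fexp (fun ω : Ω₁ × Ω₂ => w₁ ω.1 * w₂ ω.2)
      (fun ω => |condExpOn (fun ω : Ω₁ × Ω₂ => w₁ ω.1 * w₂ ω.2)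
        (fun ω => (X₁ ω.1, X₂ ω.2))
        (fun ωp => g ((fun ω : Ω₁ × Ω₂ => (Y₁ ω.1, Y₂ ω.2)) ωp)) ω| ^ p) = S := by
    rw [hSdef]
    simp only [fexp, Fintype.sum_prod_type]
    rw [Finset.sum_comm]
    refine Finset.sum_congr rfl fun b _ => ?_
    rw [Finset.mul_sum]
    refine Finset.sum_congr rfl fun a _ => ?_
    rw [condExpOn_prod w₁ w₂ X₁ X₂ (fun a' b' => g (Y₁ a', Y₂ b')) (a, b)]
    ring
  -- rewrite the RHS of the goal
  have hRHS : fexp (fun ω : Ω₁ × Ω₂ => w₁ ω.1 * w₂ ω.2)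
      (fun ω => |g ((fun ω : Ω₁ × Ω₂ => (Y₁ ω.1, Y₂ ω.2)) ω)| ^ q) = V := by
    rw [hVdef]
    simp only [fexp, Fintype.sum_prod_type]
    refine Finset.sum_congr rfl fun a _ => ?_
    rw [Finset.mul_sum]
    exact Finset.sum_congr rfl fun b _ => by ring
  -- Step A: apply hypercontractivity in the first coordinate, for each b
  have stepA : ∀ b : Ω₂,
      (∑ a, w₁ a * |condExpOn w₁ X₁ (fun a' => CE a' b) a| ^ p)
        ≤ (∑ a, w₁ a * |CE a b| ^ q) ^ (p/q) := by
    intro b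
    have h := hc₁ (fun y₁ => condExpOn w₂ X₂ (fun b' => g (y₁, Y₂ b')) b)
    simp only [fexp] at h
    set L : ℝ := ∑ a, w₁ a * |condExpOn w₁ X₁ (fun a' => CE a' b) a| ^ p with hL
    set R : ℝ := ∑ a, w₁ a * |CE a b| ^ q with hR
    have hLnn : 0 ≤ L := Finset.sum_nonneg fun a _ =>
      mul_nonneg (hw1 a) (Real.rpow_nonneg (abs_nonneg _) _)
    have hRnn : 0 ≤ R := Finset.sum_nonneg fun a _ =>
      mul_nonneg (hw1 a) (Real.rpow_nonneg (abs_nonneg _) _)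
    have h' : L ^ (1/p) ≤ R ^ (1/q) := h
    calc L = (L ^ (1/p)) ^ p := by
          rw [← Real.rpow_mul hLnn, one_div, inv_mul_cancel₀ hp0.ne', Real.rpow_one]
      _ ≤ (R ^ (1/q)) ^ p :=
          Real.rpow_le_rpow (Real.rpow_nonneg hLnn _) h' hp0.le
      _ = R ^ (p/q) := by
          rw [← Real.rpow_mul hRnn, one_div_mul_eq_div]
  -- Step C: apply hypercontractivity in the second coordinate, for each a
  have stepC : ∀ a : Ω₁,
      (∑ b, w₂ b * |CE a b| ^ p) ^ (q/p) ≤ ∑ b, w₂ b * |g (Y₁ a, Y₂ b)| ^ q := by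
    intro a
    have h := hc₂ (fun y₂ => g (Y₁ a, y₂))
    simp only [fexp] at h
    set L : ℝ := ∑ b, w₂ b * |CE a b| ^ p with hL
    set R : ℝ := ∑ b, w₂ b * |g (Y₁ a, Y₂ b)| ^ q with hR
    have hLnn : 0 ≤ L := Finset.sum_nonneg fun b _ =>
      mul_nonneg (hw2 b) (Real.rpow_nonneg (abs_nonneg _) _)
    have hRnn : 0 ≤ R := Finset.sum_nonneg fun b _ =>
      mul_nonneg (hw2 b) (Real.rpow_nonneg (abs_nonneg _) _)
    have h' : L ^ (1/p) ≤ R ^ (1/q) := h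
    calc L ^ (q/p) = (L ^ (1/p)) ^ q := by
          rw [← Real.rpow_mul hLnn, one_div_mul_eq_div]
      _ ≤ (R ^ (1/q)) ^ q :=
          Real.rpow_le_rpow (Real.rpow_nonneg hLnn _) h' hq0.le
      _ = R := by
          rw [← Real.rpow_mul hRnn, one_div, inv_mul_cancel₀ hq0.ne', Real.rpow_one]
  -- Step B: Minkowski
  have stepB := weighted_minkowski w₁ w₂ hw1 hw2 (fun a b => |CE a b|)
    (fun a b => abs_nonneg _) p q hq0 hqp
  -- Combine
  have hST : S ≤ ∑ b, w₂ b * (∑ a, w₁ a * |CE a b| ^ q) ^ (p/q) := by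
    rw [hSdef]
    exact Finset.sum_le_sum fun b _ => mul_le_mul_of_nonneg_left (stepA b) (hw2 b)
  have hUV : (∑ a, w₁ a * (∑ b, w₂ b * |CE a b| ^ p) ^ (q/p)) ≤ V := by
    rw [hVdef]
    exact Finset.sum_le_sum fun a _ => mul_le_mul_of_nonneg_left (stepC a) (hw1 a)
  have hTnn : 0 ≤ ∑ b, w₂ b * (∑ a, w₁ a * |CE a b| ^ q) ^ (p/q) :=
    Finset.sum_nonneg fun b _ => mul_nonneg (hw2 b) (Real.rpow_nonneg
      (Finset.sum_nonneg fun a _ => mul_nonneg (hw1 a)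
        (Real.rpow_nonneg (abs_nonneg _) _)) _)
  have hSV : S ^ (q/p) ≤ V :=
    le_trans (le_trans (Real.rpow_le_rpow hSnn hST (by positivity)) stepB) hUV
  rw [hLHS, hRHS]
  calc S ^ (1/p) = (S ^ (q/p)) ^ (1/q) := by
        rw [← Real.rpow_mul hSnn]
        congr 1
        field_simp
      _ ≤ V ^ (1/q) :=
        Real.rpow_le_rpow (Real.rpow_nonneg hSnn _) hSV (by positivity)
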